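/- Let D = \{z \in \mathbb{C}^2 : |z_1|^2 + |z_2|^2 + 4|1-z_1z_2|^2 < 3\}. The loop \gamma: [0,2\pi] \to \mathbb{C}^2, \gamma(\theta) = (e^{i\theta}, e^{-i\theta}), takes values in D, and the line integral \int_\gamma \frac{dz_1}{z_1} = 2\pi i \ne 0. Consequently, since dz_1/z_1 is a closed holomorphic 1-form on D (note z_1 \ne 0 on D), the first de Rham cohomology H^1(D,\mathbb{C}) is nonzero; in particular D is not simply connected. -/

import Mathlib

open Complex Real

noncomputable section

/-- The domain `D = {|z₁|² + |z₂|² + 4|1-z₁z₂|² < 3} ⊂ ℂ²`. -/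
def Dom : Set (EuclideanSpace ℂ (Fin 2)) :=
  {z | ‖z 0‖ ^ 2 + ‖z 1‖ ^ 2 + 4 * ‖1 - z 0 * z 1‖ ^ 2 < 3}

/-- The loop `γ(θ) = (e^{iθ}, e^{-iθ})`. -/
def loop (θ : ℝ) : EuclideanSpace ℂ (Fin 2) :=
  (WithLp.equiv 2 (Fin 2 → ℂ)).symm
    ![Complex.exp (Complex.I * θ), Complex.exp (-(Complex.I * θ))]

lemma loop_apply_zero (θ : ℝ) : loop θ 0 = Complex.exp (Complex.I * θ) := rfl

lemma loop_apply_one (θ : ℝ) : loop θ 1 = Complex.exp (-(Complex.I * θ)) := rfl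

lemma loop_mem_Dom (θ : ℝ) : loop θ ∈ Dom := by
  have h1 : ‖loop θ 0‖ = 1 := by
    rw [loop_apply_zero, mul_comm]
    exact Complex.norm_exp_ofReal_mul_I θ
  have h2 : ‖loop θ 1‖ = 1 := by
    rw [loop_apply_one, Complex.exp_neg, norm_inv, mul_comm,
      Complex.norm_exp_ofReal_mul_I θ, inv_one]
  have h3 : (1 : ℂ) - loop θ 0 * loop θ 1 = 0 := by
    rw [loop_apply_zero, loop_apply_one, ← Complex.exp_add]
    simp
  show ‖loop θ 0‖ ^ 2 + ‖loop θ 1‖ ^ 2 + 4 * ‖1 - loop θ 0 * loop θ 1‖ ^ 2 < 3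
  rw [h1, h2, h3]
  norm_num

lemma ne_zero_of_mem_Dom {z : EuclideanSpace ℂ (Fin 2)} (hz : z ∈ Dom) : z 0 ≠ 0 := by
  intro h0
  have hz' : ‖z 0‖ ^ 2 + ‖z 1‖ ^ 2 + 4 * ‖1 - z 0 * z 1‖ ^ 2 < 3 := hz
  rw [h0] at hz'
  simp only [norm_zero, zero_mul, sub_zero, norm_one] at hz'
  have : (0:ℝ) ≤ ‖z 1‖ ^ 2 := sq_nonneg _
  nlinarith

lemma hasDerivAt_cexp_I_mul (θ : ℝ) :
    HasDerivAt (fun t : ℝ => Complex.exp (Complex.I * t))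
      (Complex.I * Complex.exp (Complex.I * θ)) θ := by
  have h0 : HasDerivAt (fun t : ℝ => (t : ℂ)) 1 θ := by
    simpa using (hasDerivAt_id θ).ofReal_comp
  have h1 : HasDerivAt (fun t : ℝ => Complex.I * (t:ℂ)) Complex.I θ := by
    simpa using h0.const_mul Complex.I
  have := h1.cexp
  convert this using 1
  ring

lemma hasDerivAt_cexp_neg_I_mul (θ : ℝ) :
    HasDerivAt (fun t : ℝ => Complex.exp (-(Complex.I * t)))
      (-(Complex.I * Complex.exp (-(Complex.I * θ)))) θ := by
  have h0 : HasDerivAt (fun t : ℝ => (t : ℂ)) 1 θ := by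
    simpa using (hasDerivAt_id θ).ofReal_comp
  have h1 : HasDerivAt (fun t : ℝ => -(Complex.I * (t:ℂ))) (-Complex.I) θ := by
    have := (h0.const_mul Complex.I).neg
    simp only [mul_one] at this
    exact this
  have := h1.cexp
  convert this using 1
  ring

/-- Derivative of the loop. -/
def loopD (θ : ℝ) : EuclideanSpace ℂ (Fin 2) :=
  (WithLp.equiv 2 (Fin 2 → ℂ)).symm
    ![Complex.I * Complex.exp (Complex.I * θ), -(Complex.I * Complex.exp (-(Complex.I * θ)))]

lemma hasDerivAt_loop (θ : ℝ) : HasDerivAt loop (loopD θ) θ := by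
  have hpi : HasDerivAt
      (fun t : ℝ => (![Complex.exp (Complex.I * t), Complex.exp (-(Complex.I * t))] : Fin 2 → ℂ))
      (![Complex.I * Complex.exp (Complex.I * θ),
         -(Complex.I * Complex.exp (-(Complex.I * θ)))]) θ := by
    rw [hasDerivAt_pi]
    intro i
    fin_cases i
    · simpa using hasDerivAt_cexp_I_mul θ
    · simpa using hasDerivAt_cexp_neg_I_mul θ
  have hL : HasFDerivAt
      (⇑((PiLp.continuousLinearEquiv 2 ℂ (fun _ : Fin 2 => ℂ)).symm))
      (((PiLp.continuousLinearEquiv 2 ℂ (fun _ : Fin 2 => ℂ)).symm :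
        (Fin 2 → ℂ) →L[ℂ] EuclideanSpace ℂ (Fin 2)).restrictScalars ℝ)
      (![Complex.exp (Complex.I * θ), Complex.exp (-(Complex.I * θ))]) := by
    exact (((PiLp.continuousLinearEquiv 2 ℂ (fun _ : Fin 2 => ℂ)).symm :
      (Fin 2 → ℂ) →L[ℂ] EuclideanSpace ℂ (Fin 2)).hasFDerivAt).restrictScalars ℝ
  exact hL.comp_hasDerivAt θ hpi

lemma loop_continuous : Continuous loop :=
  continuous_iff_continuousAt.mpr fun θ => (hasDerivAt_loop θ).continuousAt

lemma loop_two_pi : loop (2 * π) = loop 0 := by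
  have e1 : Complex.exp (Complex.I * ((2 * π : ℝ) : ℂ)) = 1 := by
    push_cast
    rw [show Complex.I * (2 * (π:ℂ)) = 2 * π * Complex.I by ring]
    exact Complex.exp_two_pi_mul_I
  have e2 : Complex.exp (-(Complex.I * ((2 * π : ℝ) : ℂ))) = 1 := by
    rw [Complex.exp_neg, e1, inv_one]
  unfold loop
  rw [e1, e2]
  norm_num

noncomputable section

open unitInterval

lemma ratio_re_pos {a b : ℂ} (ha : a ≠ 0) (h : ‖b - a‖ < ‖a‖) : 0 < (b / a).re := by
  have h1 : ‖b / a - 1‖ < 1 := by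
    rw [show b / a - 1 = (b - a) / a by field_simp, norm_div,
      div_lt_one (norm_pos_iff.mpr ha)]
    exact h
  have h2 : |(b / a - 1).re| ≤ ‖b / a - 1‖ := by
    exact Complex.abs_re_le_norm _
  have h3 : (b / a - 1).re = (b / a).re - 1 := by simp
  rw [h3] at h2
  have h4 := abs_lt.mp (lt_of_le_of_lt h2 h1)
  linarith [h4.1]

lemma prod_telescope (f : ℕ → ℂ) (hf : ∀ k, f k ≠ 0) :
    ∀ N, ∏ k ∈ Finset.range N, f (k + 1) / f k = f N / f 0 := by
  intro N
  induction N with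
  | zero => simp [div_self (hf 0)]
  | succ N ih =>
      rw [Finset.prod_range_succ, ih, div_mul_div_comm, mul_comm (f 0) (f N),
        mul_div_mul_left _ _ (hf N)]

lemma no_winding (G : I × I → ℂ) (hGcont : Continuous G) (hGne : ∀ x, G x ≠ 0)
    (hside : ∀ s : I, G (s, 1) = G (s, 0))
    (htop : ∀ t : I, G (1, t) = G (1, 0))
    (hbot : ∀ t : I, G (0, t) = Complex.exp (Complex.I * ((2 * π * (t : ℝ) : ℝ) : ℂ))) :
    False := by
  -- minimum of ‖G‖
  obtain ⟨x₀, -, hx₀⟩ := isCompact_univ.exists_isMinOn Set.univ_nonempty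
    hGcont.norm.continuousOn
  set m := ‖G x₀‖ with hm_def
  have hm : 0 < m := norm_pos_iff.mpr (hGne x₀)
  have hmle : ∀ x, m ≤ ‖G x‖ := fun x => hx₀ (Set.mem_univ x)
  -- uniform continuity
  have hUC := CompactSpace.uniformContinuous_of_continuous hGcont
  rw [Metric.uniformContinuous_iff] at hUC
  obtain ⟨δ, hδ, hδ'⟩ := hUC m hm
  -- choose n
  obtain ⟨n, hn3, hinv⟩ : ∃ n : ℕ, 3 ≤ n ∧ 1 / (n:ℝ) < δ := by
    obtain ⟨n0, hn0⟩ := exists_nat_gt (1 / δ)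
    refine ⟨n0 + 3, by omega, ?_⟩
    have hnpos : (0:ℝ) < (n0 + 3 : ℕ) := by positivity
    have h1 : 1 / δ < ((n0 + 3 : ℕ):ℝ) :=
      lt_of_lt_of_le hn0 (by exact_mod_cast Nat.le_add_right n0 3)
    have h2 : 1 < ((n0 + 3 : ℕ):ℝ) * δ := (div_lt_iff₀ hδ).mp h1
    rw [div_lt_iff₀ hnpos]
    linarith
  have hnpos : (0:ℝ) < n := by
    have : (3:ℝ) ≤ n := by exact_mod_cast hn3
    linarith
  -- grid points
  set tp : ℕ → I := fun k => Set.projIcc 0 1 zero_le_one ((k : ℝ) / n) with htp_def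
  have htp : ∀ k, k ≤ n → ((tp k : ℝ)) = (k : ℝ) / n := by
    intro k hk
    have hmem : ((k:ℝ)/n) ∈ Set.Icc (0:ℝ) 1 :=
      ⟨by positivity, by rw [div_le_one hnpos]; exact_mod_cast hk⟩
    rw [htp_def]
    simp only
    rw [Set.projIcc_of_mem _ hmem]
  have htp0 : tp 0 = 0 := by
    apply Subtype.ext
    rw [htp 0 (Nat.zero_le n)]
    simp
  have htpn : tp n = 1 := by
    apply Subtype.ext
    rw [htp n le_rfl]
    field_simp
    rfl
  -- steps are small
  have hstep : ∀ (s : I) (k : ℕ), k + 1 ≤ n → ‖G (s, tp (k+1)) - G (s, tp k)‖ < m := by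
    intro s k hk
    rw [← dist_eq_norm]
    apply hδ'
    rw [Prod.dist_eq]
    have hd1 : dist (s, tp (k+1)).1 (s, tp k).1 = 0 := by simp
    have hd2 : dist (tp (k+1)) (tp k) = 1 / (n:ℝ) := by
      rw [Subtype.dist_eq, htp _ hk, htp _ (Nat.le_of_succ_le hk), Real.dist_eq]
      have : ((k+1:ℕ):ℝ)/n - (k:ℝ)/n = 1/n := by
        push_cast
        field_simp
        ring
      rw [this, abs_of_pos (by positivity)]
    rw [hd1, hd2]
    simpa using hinv
  have hratio : ∀ (s : I) (k : ℕ), k + 1 ≤ n → 0 < (G (s, tp (k+1)) / G (s, tp k)).re :=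
    fun s k hk => ratio_re_pos (hGne _) (lt_of_lt_of_le (hstep s k hk) (hmle _))
  -- the discrete winding sum
  set W : I → ℂ := fun s => ∑ k ∈ Finset.range n, Complex.log (G (s, tp (k+1)) / G (s, tp k))
    with hW_def
  have hWcont : Continuous W := by
    apply continuous_finset_sum
    intro k hk
    have hk' : k + 1 ≤ n := Finset.mem_range.mp hk
    have hr : Continuous fun s : I => G (s, tp (k+1)) / G (s, tp k) :=
      (hGcont.comp (continuous_id.prodMk continuous_const)).div
        (hGcont.comp (continuous_id.prodMk continuous_const)) (fun s => hGne _)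
    rw [continuous_iff_continuousAt]
    intro s
    have hl : ContinuousAt (fun z : ℂ => Complex.log z) (G (s, tp (k+1)) / G (s, tp k)) :=
      continuousAt_clog (Complex.mem_slitPlane_iff.mpr (Or.inl (hratio s k hk')))
    exact Filter.Tendsto.comp hl hr.continuousAt
  have hWval : ∀ s : I, ∃ j : ℤ, W s = j * (2 * π * Complex.I) := by
    intro s
    rw [← Complex.exp_eq_one_iff, hW_def]
    simp only
    rw [Complex.exp_sum,
      Finset.prod_congr rfl
        (fun k _ => Complex.exp_log (div_ne_zero (hGne _) (hGne _))),
      prod_telescope (fun k => G (s, tp k)) (fun k => hGne _) n,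
      htpn, htp0, hside s]
    exact div_self (hGne _)
  have hW1 : W 1 = 0 := by
    rw [hW_def]
    simp only
    apply Finset.sum_eq_zero
    intro k hk
    rw [htop (tp (k+1)), htop (tp k), div_self (hGne _), Complex.log_one]
  have hW0 : W 0 = Complex.I * ((2 * π : ℝ) : ℂ) := by
    have hterm : ∀ k ∈ Finset.range n,
        Complex.log (G (0, tp (k+1)) / G (0, tp k))
          = Complex.I * ((2 * π / n : ℝ) : ℂ) := by
      intro k hk
      have hk' : k + 1 ≤ n := Finset.mem_range.mp hk
      rw [hbot (tp (k+1)), hbot (tp k), htp _ hk', htp _ (Nat.le_of_succ_le hk'),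
        ← Complex.exp_sub, ← mul_sub, ← Complex.ofReal_sub]
      have harg : 2 * π * (((k+1:ℕ):ℝ) / n) - 2 * π * ((k:ℝ) / n) = 2 * π / n := by
        push_cast
        field_simp
        ring
      rw [harg]
      apply Complex.log_exp
      · have h' : (Complex.I * ((2 * π / n : ℝ) : ℂ)).im = 2 * π / n := by simp
        rw [h']
        have hq : 0 < 2 * π / n := by positivity
        linarith [pi_pos]
      · have h' : (Complex.I * ((2 * π / n : ℝ) : ℂ)).im = 2 * π / n := by simp
        rw [h']
        have h3 : (3:ℝ) ≤ n := by exact_mod_cast hn3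
        rw [div_le_iff₀ hnpos]
        nlinarith [pi_pos]
    rw [hW_def]
    simp only
    rw [Finset.sum_congr rfl hterm, Finset.sum_const, Finset.card_range, nsmul_eq_mul]
    have hn0' : (n:ℂ) ≠ 0 := by
      exact_mod_cast hnpos.ne'
    have hc : ((2 * π / n : ℝ) : ℂ) = ((2 * π : ℝ) : ℂ) / (n : ℂ) := by
      push_cast
      ring
    rw [hc]
    field_simp
  -- intermediate value
  set kf : ℝ → ℝ := fun s => (W (Set.projIcc 0 1 zero_le_one s)).im with hkf_def
  have hkcont : Continuous kf := Complex.continuous_im.comp (hWcont.comp continuous_projIcc)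
  have hpj0 : Set.projIcc (0:ℝ) 1 zero_le_one 0 = 0 := Set.projIcc_left _
  have hpj1 : Set.projIcc (0:ℝ) 1 zero_le_one 1 = 1 := Set.projIcc_right _
  have hk0 : kf 0 = 2 * π := by
    rw [hkf_def]; simp only
    rw [hpj0, hW0]
    simp
  have hk1 : kf 1 = 0 := by
    rw [hkf_def]; simp only
    rw [hpj1, hW1]
    simp
  have hmem : π ∈ Set.Icc (kf 1) (kf 0) := by
    rw [hk0, hk1]
    constructor
    · exact le_of_lt pi_pos
    · linarith [pi_pos]
  obtain ⟨s, -, hs⟩ := intermediate_value_Icc' zero_le_one hkcont.continuousOn hmem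
  obtain ⟨j, hj⟩ := hWval (Set.projIcc 0 1 zero_le_one s)
  rw [hkf_def] at hs
  simp only at hs
  rw [hj] at hs
  have him : ((j:ℂ) * (2 * (π:ℂ) * Complex.I)).im = (j:ℝ) * (2 * π) := by
    simp [Complex.mul_im]
  rw [him] at hs
  have h2j : (2 * (j:ℝ)) * π = 1 * π := by linarith
  have h2j' : (2 * (j:ℝ)) = 1 := mul_right_cancel₀ pi_ne_zero h2j
  have : (2 * j : ℤ) = 1 := by exact_mod_cast h2j'
  omega

lemma not_simplyConnected : ¬ SimplyConnectedSpace Dom := by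
  intro hsc
  set p : Dom := ⟨loop 0, loop_mem_Dom 0⟩ with hp
  have hp0 : (p : EuclideanSpace ℂ (Fin 2)) 0 ≠ 0 := ne_zero_of_mem_Dom p.2
  let γ : Path p p :=
    { toFun := fun t => ⟨loop (2 * π * (t : ℝ)), loop_mem_Dom _⟩
      continuous_toFun := by
        apply Continuous.subtype_mk
        exact loop_continuous.comp (by fun_prop)
      source' := by
        apply Subtype.ext
        show loop (2 * π * ((0:I):ℝ)) = loop 0
        norm_num
      target' := by
        apply Subtype.ext
        show loop (2 * π * ((1:I):ℝ)) = loop 0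
        rw [show ((1:I):ℝ) = 1 from rfl, mul_one]
        exact loop_two_pi }
  obtain ⟨H⟩ := SimplyConnectedSpace.paths_homotopic γ (Path.refl p)
  apply no_winding (fun x : I × I => ((H x : Dom) : EuclideanSpace ℂ (Fin 2)) 0)
  · have h1 : Continuous fun x : I × I => ((H x : Dom) : EuclideanSpace ℂ (Fin 2)) :=
      continuous_subtype_val.comp H.continuous
    exact (EuclideanSpace.proj (0 : Fin 2) :
      EuclideanSpace ℂ (Fin 2) →L[ℂ] ℂ).continuous.comp h1
  · exact fun x => ne_zero_of_mem_Dom (H x).2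
  · intro s
    show ((H (s, 1) : Dom) : EuclideanSpace ℂ (Fin 2)) 0
        = ((H (s, 0) : Dom) : EuclideanSpace ℂ (Fin 2)) 0
    rw [H.source s, H.target s]
  · intro t
    show ((H (1, t) : Dom) : EuclideanSpace ℂ (Fin 2)) 0
        = ((H (1, 0) : Dom) : EuclideanSpace ℂ (Fin 2)) 0
    rw [H.apply_one, H.apply_one]
    simp
  · intro t
    show ((H (0, t) : Dom) : EuclideanSpace ℂ (Fin 2)) 0
        = Complex.exp (Complex.I * ((2 * π * (t : ℝ) : ℝ) : ℂ))
    rw [H.apply_zero]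
    show loop (2 * π * (t : ℝ)) 0 = _
    rw [loop_apply_zero]

/-- The loop `γ(θ) = (e^{iθ}, e^{-iθ})` lies in `D`, the line integral of `dz₁/z₁` along it
equals `2πi ≠ 0`, hence the closed holomorphic 1-form `dz₁/z₁` (note `z₁ ≠ 0` on `D`) is
not exact on `D`; in particular `H¹(D,ℂ) ≠ 0` and `D` is not simply connected. -/
theorem stmt12 :
    (∀ θ : ℝ, loop θ ∈ Dom) ∧
    (∫ θ in (0 : ℝ)..(2 * π),
        deriv (fun t : ℝ => Complex.exp (Complex.I * t)) θ / Complex.exp (Complex.I * θ))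
      = 2 * π * Complex.I ∧
    (2 * (π : ℂ) * Complex.I ≠ 0) ∧
    (∀ z ∈ Dom, z 0 ≠ 0) ∧
    (¬ ∃ F : EuclideanSpace ℂ (Fin 2) → ℂ, ∀ z ∈ Dom,
      HasFDerivAt F ((1 / z 0) •
        (EuclideanSpace.proj (0 : Fin 2) : EuclideanSpace ℂ (Fin 2) →L[ℂ] ℂ)) z) ∧
    ¬ SimplyConnectedSpace Dom := by
  refine ⟨loop_mem_Dom, ?_, ?_, fun z hz => ne_zero_of_mem_Dom hz, ?_, not_simplyConnected⟩
  · have hint : ∀ θ : ℝ,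
        deriv (fun t : ℝ => Complex.exp (Complex.I * t)) θ / Complex.exp (Complex.I * θ)
          = Complex.I := by
      intro θ
      rw [(hasDerivAt_cexp_I_mul θ).deriv, mul_div_assoc,
        div_self (Complex.exp_ne_zero _), mul_one]
    simp only [hint]
    rw [intervalIntegral.integral_const]
    push_cast
    rw [Complex.real_smul]
    push_cast
    ring
  · simp [Real.pi_ne_zero, Complex.I_ne_zero, Complex.ofReal_ne_zero]
  · rintro ⟨F, hF⟩
    have key : ∀ θ : ℝ, HasDerivAt (fun t => F (loop t)) Complex.I θ := by
      intro θ
      have hz := hF (loop θ) (loop_mem_Dom θ)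
      have hcomp := (hz.restrictScalars ℝ).comp_hasDerivAt θ (hasDerivAt_loop θ)
      have heval : ((1 / loop θ 0) •
          (EuclideanSpace.proj (0 : Fin 2) : EuclideanSpace ℂ (Fin 2) →L[ℂ] ℂ)) (loopD θ)
          = Complex.I := by
        have h1 : (EuclideanSpace.proj (0 : Fin 2) :
            EuclideanSpace ℂ (Fin 2) →L[ℂ] ℂ) (loopD θ)
            = Complex.I * Complex.exp (Complex.I * θ) := rfl
        rw [ContinuousLinearMap.smul_apply, h1, loop_apply_zero, smul_eq_mul]
        field_simp
      have heval' : (ContinuousLinearMap.restrictScalars ℝ ((1 / loop θ 0) •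
          (EuclideanSpace.proj (0 : Fin 2) : EuclideanSpace ℂ (Fin 2) →L[ℂ] ℂ))) (loopD θ)
          = Complex.I := heval
      rwa [heval'] at hcomp
    have hFTC : (∫ θ in (0:ℝ)..(2*π), (Complex.I : ℂ))
        = F (loop (2*π)) - F (loop 0) :=
      intervalIntegral.integral_eq_sub_of_hasDerivAt (fun t _ => key t) intervalIntegrable_const
    rw [loop_two_pi, sub_self, intervalIntegral.integral_const, sub_zero,
      Complex.real_smul] at hFTC
    have h2 : ((2 * π : ℝ) : ℂ) ≠ 0 := by
      simp [Real.pi_ne_zero]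
    exact (mul_ne_zero h2 Complex.I_ne_zero) hFTC

end
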